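/- For three o-points A, B, C with coincident positions p_A = p_B = p_C, the configuration A ∠i B, B ∠k C, A ∠s C is realizable if and only if turn_m(i, k, -s) holds. -/

import Mathlib

open Real Complex

/-- The OPRA_m sector `[i]_m` as a subset of the circle `ℝ/2πℤ` (`Real.Angle`):
an open arc if `i` is odd, a single point if `i` is even. -/
noncomputable def sector (m : ℕ) (i : ZMod (4*m)) : Set Real.Angle :=
  if Odd i.val then
    (fun r : ℝ => (r : Real.Angle)) ''
      Set.Ioo (2*π*((i.val : ℝ)-1)/(4*m)) (2*π*((i.val : ℝ)+1)/(4*m))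
  else {((2*π*(i.val : ℝ)/(4*m) : ℝ) : Real.Angle)}

/-- The direction angle `φ_XY` of the vector `Y - X`, as an element of the circle. -/
noncomputable def phiAngle (X Y : ℂ) : Real.Angle := (Complex.arg (Y - X) : Real.Angle)

/-- An o-point: a point of the plane (modeled as `ℂ`) with an orientation. -/
abbrev OPoint := ℂ × Real.Angle

/-- The distinct-position OPRA_m base relation `A ∠_i^j B`. -/
noncomputable def oprarel (m : ℕ) (i j : ZMod (4*m)) (A B : OPoint) : Prop :=
  A.1 ≠ B.1 ∧ phiAngle A.1 B.1 - A.2 ∈ sector m i ∧ phiAngle B.1 A.1 - B.2 ∈ sector m j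

/-- The same-position OPRA_m base relation `A ∠i B`. -/
noncomputable def oprasame (m : ℕ) (i : ZMod (4*m)) (A B : OPoint) : Prop :=
  A.1 = B.1 ∧ B.2 - A.2 ∈ sector m i

/-- `turn_m(i,j,k)`. -/
def turnRel (m : ℕ) (i j k : ZMod (4*m)) : Prop :=
  if Odd i.val ∧ Odd j.val then i + j + k = 0 ∨ i + j + k = 1 ∨ i + j + k = -1
  else i + j + k = 0

/-- `sign_m(i)`. -/
def signm (m : ℕ) (i : ZMod (4*m)) : ℤ :=
  if i.val = 0 ∨ i.val = 2*m then 0 else if i.val < 2*m then 1 else -1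

/-- `triangle_m(i,j,k)`. -/
def triRel (m : ℕ) (i j k : ZMod (4*m)) : Prop :=
  turnRel m i j (k - ((2*m : ℕ) : ZMod (4*m))) ∧
  ¬(i = ((2*m : ℕ) : ZMod (4*m)) ∧ j = ((2*m : ℕ) : ZMod (4*m)) ∧ k = ((2*m : ℕ) : ZMod (4*m))) ∧
  signm m i = signm m j ∧ signm m j = signm m k

/-- The sign of an angle, where both `0` and `π` get sign `0`. -/
noncomputable def angsign (θ : Real.Angle) : ℤ := by
  classical exact if θ.toReal = 0 ∨ θ.toReal = π then 0 else if 0 < θ.toReal then 1 else -1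
section Aux

lemma mem_sector_iff (m : ℕ) (j : ZMod (4*m)) (θ : Real.Angle) :
    θ ∈ sector m j ↔ ∃ e : ℝ,
      ((Odd j.val ∧ |e| < 2*π/(4*m)) ∨ (¬ Odd j.val ∧ e = 0)) ∧
      θ = ((2*π*(j.val:ℝ)/(4*m) + e : ℝ) : Real.Angle) := by
  unfold sector
  by_cases h : Odd j.val
  · simp only [h, if_true, Set.mem_image, Set.mem_Ioo, true_and, not_true, false_and, or_false]
    constructor
    · rintro ⟨r, ⟨h1, h2⟩, rfl⟩
      refine ⟨r - 2*π*(j.val:ℝ)/(4*m), ?_, by ring_nf⟩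
      rw [abs_lt]
      constructor
      · have : 2*π*((j.val : ℝ)-1)/(4*m) = 2*π*(j.val:ℝ)/(4*m) - 2*π/(4*m) := by ring
        linarith [this ▸ h1]
      · have : 2*π*((j.val : ℝ)+1)/(4*m) = 2*π*(j.val:ℝ)/(4*m) + 2*π/(4*m) := by ring
        linarith [this ▸ h2]
    · rintro ⟨e, he, rfl⟩
      rw [abs_lt] at he
      refine ⟨2*π*(j.val:ℝ)/(4*m) + e, ⟨?_, ?_⟩, rfl⟩
      · have : 2*π*((j.val : ℝ)-1)/(4*m) = 2*π*(j.val:ℝ)/(4*m) - 2*π/(4*m) := by ring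
        linarith [he.1]
      · have : 2*π*((j.val : ℝ)+1)/(4*m) = 2*π*(j.val:ℝ)/(4*m) + 2*π/(4*m) := by ring
        linarith [he.2]
  · simp only [h, if_false, Set.mem_singleton_iff, false_and, not_false_iff, true_and, false_or]
    constructor
    · rintro rfl; exact ⟨0, rfl, by norm_num⟩
    · rintro ⟨e, rfl, rfl⟩; norm_num

lemma Dbound (m : ℕ) (hm : 1 ≤ m) (D : ℤ) (E : ℝ) (c : ℝ)
    (key : (D:ℝ)*(2*π) = E*(4*(m:ℝ))) (hE : |E| < c * (2*π/(4*(m:ℝ)))) :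
    |(D:ℝ)| < c := by
  have hm0 : (0:ℝ) < m := by exact_mod_cast hm
  have h4 : (0:ℝ) < 4*(m:ℝ) := by positivity
  have hc : (2*π/(4*(m:ℝ)))*(4*(m:ℝ)) = 2*π := by field_simp
  have hmul := mul_lt_mul_of_pos_right hE h4
  rw [mul_assoc, hc] at hmul
  have h1 : |(D:ℝ)| * (2*π) = |E| * (4*(m:ℝ)) := by
    rw [← abs_of_pos (show (0:ℝ) < 2*π from by positivity), ← abs_mul, key, abs_mul,
      abs_of_pos h4]
  nlinarith [pi_pos]

end Aux

lemma fkey (m : ℕ) (hm : 1 ≤ m) (iv kv sv : ℕ) (n : ℤ) (e₁ e₂ e₃ : ℝ)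
    (hn : 2*π*(sv:ℝ)/(4*m) + e₃ - (2*π*(iv:ℝ)/(4*m) + e₁ + (2*π*(kv:ℝ)/(4*m) + e₂)) = 2*π*n) :
    (((iv:ℤ) + kv - sv + 4*m*n : ℤ) : ℝ) * (2*π) = (e₃ - e₁ - e₂) * (4*(m:ℝ)) := by
  have hm0 : (0:ℝ) < m := by exact_mod_cast hm
  have h4 : ((4:ℝ)*m) ≠ 0 := by positivity
  push_cast
  field_simp at hn
  linear_combination -hn

lemma rkey (m : ℕ) (hm : 1 ≤ m) (iv kv sv : ℕ) (t' n : ℤ)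
    (hnr : (iv:ℝ) + kv - sv - t' = 4*m*n) :
    2*π*(iv:ℝ)/(4*m) + (-(t':ℝ)*(2*π/(4*(m:ℝ)))/4)
      + (2*π*(kv:ℝ)/(4*m) + (-(t':ℝ)*(2*π/(4*(m:ℝ)))/4))
      - (2*π*(sv:ℝ)/(4*m) + (t':ℝ)*(2*π/(4*(m:ℝ)))/2) = 2*π*n := by
  have hm0 : (0:ℝ) < m := by exact_mod_cast hm
  have h4 : ((4:ℝ)*m) ≠ 0 := by positivity
  field_simp
  linear_combination 8 * hnr

/-- composition of two same-position relations. -/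
theorem stmt14 (m : ℕ) (hm : 1 ≤ m) (i k s : ZMod (4*m)) :
    (∃ A B C : OPoint, oprasame m i A B ∧ oprasame m k B C ∧ oprasame m s A C) ↔
      turnRel m i k (-s) := by
  haveI : NeZero (4*m) := ⟨by omega⟩
  have hm0 : (0:ℝ) < m := by exact_mod_cast hm
  have hδpos : (0:ℝ) < 2*π/(4*(m:ℝ)) := by positivity
  constructor
  · rintro ⟨A, B, C, ⟨hab, h1⟩, ⟨hbc, h2⟩, ⟨hac, h3⟩⟩
    rw [mem_sector_iff] at h1 h2 h3
    obtain ⟨e₁, c1, hθ1⟩ := h1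
    obtain ⟨e₂, c2, hθ2⟩ := h2
    obtain ⟨e₃, c3, hθ3⟩ := h3
    have hsum : C.2 - A.2 = (B.2 - A.2) + (C.2 - B.2) := by abel
    rw [hθ1, hθ2, hθ3, ← Real.Angle.coe_add] at hsum
    obtain ⟨n, hn⟩ := Real.Angle.angle_eq_iff_two_pi_dvd_sub.mp hsum
    set D : ℤ := (i.val:ℤ) + k.val - s.val + 4*m*n with hD
    obtain ⟨w, hw⟩ : ∃ w : ℤ, D = (i.val:ℤ) + k.val - s.val + 4*w :=
      ⟨(m:ℤ)*n, by rw [hD]; ring⟩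
    have key : (D:ℝ) * (2*π) = (e₃ - e₁ - e₂) * (4*(m:ℝ)) := by
      have := fkey m hm i.val k.val s.val n e₁ e₂ e₃ hn
      rw [← hD] at this
      exact this
    have b1 : |e₁| < 2*π/(4*(m:ℝ)) := by
      rcases c1 with ⟨_, h⟩ | ⟨_, h⟩
      · exact h
      · rw [h, abs_zero]; exact hδpos
    have b2 : |e₂| < 2*π/(4*(m:ℝ)) := by
      rcases c2 with ⟨_, h⟩ | ⟨_, h⟩
      · exact h
      · rw [h, abs_zero]; exact hδpos
    have b3 : |e₃| < 2*π/(4*(m:ℝ)) := by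
      rcases c3 with ⟨_, h⟩ | ⟨_, h⟩
      · exact h
      · rw [h, abs_zero]; exact hδpos
    obtain ⟨l1, r1⟩ := abs_lt.mp b1
    obtain ⟨l2, r2⟩ := abs_lt.mp b2
    obtain ⟨l3, r3⟩ := abs_lt.mp b3
    have hz : i + k + (-s) = ((D : ℤ) : ZMod (4*m)) := by
      have h4z : ((4:ZMod (4*m)))*((m:ℕ) : ZMod (4*m)) = 0 := by
        have h := ZMod.natCast_self (4*m)
        push_cast at h
        linear_combination h
      rw [hD]
      push_cast
      simp only [ZMod.natCast_val, ZMod.cast_id]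
      linear_combination (-(n : ZMod (4*m))) * h4z
    clear_value D
    have hDabs : |(D:ℝ)| < 3 := by
      refine Dbound m hm D _ 3 key ?_
      rw [abs_lt]; constructor <;> linarith
    have hDZ : -3 < D ∧ D < 3 := by
      rw [abs_lt] at hDabs
      exact ⟨by exact_mod_cast hDabs.1, by exact_mod_cast hDabs.2⟩
    unfold turnRel
    split_ifs with hik
    · -- both i.val and k.val odd: D ∈ {-1,0,1}
      have hD' : D = -1 ∨ D = 0 ∨ D = 1 := by
        by_contra hcon
        push_neg at hcon
        have hDe : D = 2 ∨ D = -2 := by omega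
        have hse : ¬ Odd s.val := by
          intro hs
          obtain ⟨a, ha⟩ := hik.1
          obtain ⟨b, hb⟩ := hik.2
          obtain ⟨c, hc⟩ := hs
          rcases hDe with h | h <;> omega
        have he₃ : e₃ = 0 := by
          rcases c3 with ⟨h, _⟩ | ⟨_, h⟩
          · exact absurd h hse
          · exact h
        have hDabs2 : |(D:ℝ)| < 2 := by
          refine Dbound m hm D _ 2 key ?_
          rw [he₃, abs_lt]; constructor <;> linarith
        rw [abs_lt] at hDabs2
        have : (-2:ℤ) < D ∧ D < 2 :=
          ⟨by exact_mod_cast hDabs2.1, by exact_mod_cast hDabs2.2⟩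
        omega
      rcases hD' with h | h | h <;> rw [h] at hz <;> push_cast at hz
      · right; right; exact hz
      · left; exact hz
      · right; left; exact hz
    · -- not both odd: D = 0
      have hD0 : D = 0 := by
        have hzero : ∀ e : ℝ, ((¬ Odd s.val) ∧ e = e₃) ∨ ((¬ Odd i.val) ∧ e = e₁) ∨
            ((¬ Odd k.val) ∧ e = e₂) → e = 0 := by
          rintro e (⟨h, rfl⟩ | ⟨h, rfl⟩ | ⟨h, rfl⟩)
          · rcases c3 with ⟨h', _⟩ | ⟨_, h'⟩
            exacts [absurd h' h, h']
          · rcases c1 with ⟨h', _⟩ | ⟨_, h'⟩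
            exacts [absurd h' h, h']
          · rcases c2 with ⟨h', _⟩ | ⟨_, h'⟩
            exacts [absurd h' h, h']
        have toZ : |(D:ℝ)| < 1 → D = 0 := by
          intro habs
          rw [abs_lt] at habs
          have : (-1:ℤ) < D ∧ D < 1 :=
            ⟨by exact_mod_cast habs.1, by exact_mod_cast habs.2⟩
          omega
        rcases Nat.even_or_odd i.val with hie | hio
        · rcases Nat.even_or_odd k.val with hke | hko
          · -- both even
            have he₁ : e₁ = 0 := hzero e₁ (Or.inr (Or.inl ⟨Nat.not_odd_iff_even.mpr hie, rfl⟩))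
            have he₂ : e₂ = 0 := hzero e₂ (Or.inr (Or.inr ⟨Nat.not_odd_iff_even.mpr hke, rfl⟩))
            refine toZ (Dbound m hm D _ 1 key ?_)
            rw [he₁, he₂, abs_lt]
            constructor <;> linarith
          · -- i even, k odd
            have he₁ : e₁ = 0 := hzero e₁ (Or.inr (Or.inl ⟨Nat.not_odd_iff_even.mpr hie, rfl⟩))
            have hDabs2 : |(D:ℝ)| < 2 := by
              refine Dbound m hm D _ 2 key ?_
              rw [he₁, abs_lt]
              constructor <;> linarith
            have hD1 : -2 < D ∧ D < 2 := by
              rw [abs_lt] at hDabs2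
              exact ⟨by exact_mod_cast hDabs2.1, by exact_mod_cast hDabs2.2⟩
            by_contra hcon
            have hDe : D = 1 ∨ D = -1 := by omega
            have hse : ¬ Odd s.val := by
              intro hs
              obtain ⟨c, hc⟩ := hs
              obtain ⟨a, ha⟩ := hie
              obtain ⟨b, hb⟩ := hko
              rcases hDe with h | h <;> omega
            have he₃ : e₃ = 0 := hzero e₃ (Or.inl ⟨hse, rfl⟩)
            refine absurd (toZ (Dbound m hm D _ 1 key ?_)) hcon
            rw [he₁, he₃, abs_lt]
            constructor <;> linarith
        · rcases Nat.even_or_odd k.val with hke | hko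
          · -- i odd, k even
            have he₂ : e₂ = 0 := hzero e₂ (Or.inr (Or.inr ⟨Nat.not_odd_iff_even.mpr hke, rfl⟩))
            have hDabs2 : |(D:ℝ)| < 2 := by
              refine Dbound m hm D _ 2 key ?_
              rw [he₂, abs_lt]
              constructor <;> linarith
            have hD1 : -2 < D ∧ D < 2 := by
              rw [abs_lt] at hDabs2
              exact ⟨by exact_mod_cast hDabs2.1, by exact_mod_cast hDabs2.2⟩
            by_contra hcon
            have hDe : D = 1 ∨ D = -1 := by omega
            have hse : ¬ Odd s.val := by
              intro hs
              obtain ⟨c, hc⟩ := hs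
              obtain ⟨a, ha⟩ := hio
              obtain ⟨b, hb⟩ := hke
              rcases hDe with h | h <;> omega
            have he₃ : e₃ = 0 := hzero e₃ (Or.inl ⟨hse, rfl⟩)
            refine absurd (toZ (Dbound m hm D _ 1 key ?_)) hcon
            rw [he₂, he₃, abs_lt]
            constructor <;> linarith
          · exact absurd ⟨hio, hko⟩ hik
      rw [hD0] at hz
      push_cast at hz
      exact hz
  · intro ht
    obtain ⟨t', ht1, ht2⟩ : ∃ t' : ℤ, i + k + (-s) = ((t' : ℤ) : ZMod (4*m)) ∧
        (t' = 0 ∨ ((t' = 1 ∨ t' = -1) ∧ Odd i.val ∧ Odd k.val)) := by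
      unfold turnRel at ht
      split_ifs at ht with h
      · rcases ht with h0 | h0 | h0
        · exact ⟨0, by simpa using h0, Or.inl rfl⟩
        · exact ⟨1, by simpa using h0, Or.inr ⟨Or.inl rfl, h⟩⟩
        · exact ⟨-1, by simpa using h0, Or.inr ⟨Or.inr rfl, h⟩⟩
      · exact ⟨0, by simpa using ht, Or.inl rfl⟩
    obtain ⟨n, hn⟩ : ∃ n : ℤ, (i.val:ℤ) + k.val - s.val - t' = (4*m) * n := by
      have hd : (((4*m : ℕ)) : ℤ) ∣ ((i.val:ℤ) + k.val - s.val - t') := by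
        rw [← ZMod.intCast_zmod_eq_zero_iff_dvd]
        push_cast
        simp only [ZMod.natCast_val, ZMod.cast_id]
        linear_combination ht1
      obtain ⟨n, hn⟩ := hd
      exact ⟨n, by push_cast at hn ⊢; linarith⟩
    have hnr : (i.val:ℝ) + k.val - s.val - t' = 4*m*n := by exact_mod_cast hn
    have ht3 : t' = 0 ∨ t' = 1 ∨ t' = -1 := by
      rcases ht2 with h | ⟨h, _⟩
      · exact Or.inl h
      · exact Or.inr h
    have memo : ∀ j : ZMod (4*m), (t' = 0 ∨ Odd j.val) →
        ((2*π*(j.val:ℝ)/(4*m) + (-(t':ℝ)*(2*π/(4*(m:ℝ)))/4) : ℝ) : Real.Angle) ∈ sector m j := by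
      intro j hj
      rw [mem_sector_iff]
      refine ⟨-(t':ℝ)*(2*π/(4*(m:ℝ)))/4, ?_, rfl⟩
      by_cases hjo : Odd j.val
      · left
        refine ⟨hjo, ?_⟩
        rcases ht3 with rfl | rfl | rfl <;> push_cast <;> rw [abs_lt] <;>
          constructor <;> linarith
      · right
        refine ⟨hjo, ?_⟩
        rcases hj with rfl | h
        · push_cast; ring
        · exact absurd h hjo
    refine ⟨(0, (0:Real.Angle)),
      (0, ((2*π*(i.val:ℝ)/(4*m) + (-(t':ℝ)*(2*π/(4*(m:ℝ)))/4) : ℝ) : Real.Angle)),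
      (0, ((2*π*(i.val:ℝ)/(4*m) + (-(t':ℝ)*(2*π/(4*(m:ℝ)))/4)
            + (2*π*(k.val:ℝ)/(4*m) + (-(t':ℝ)*(2*π/(4*(m:ℝ)))/4)) : ℝ) : Real.Angle)),
      ⟨rfl, ?_⟩, ⟨rfl, ?_⟩, ⟨rfl, ?_⟩⟩
    · rw [sub_zero]
      refine memo i ?_
      rcases ht2 with h | ⟨_, h, _⟩
      · exact Or.inl h
      · exact Or.inr h
    · rw [← Real.Angle.coe_sub]
      have harr : (2*π*(i.val:ℝ)/(4*m) + (-(t':ℝ)*(2*π/(4*(m:ℝ)))/4)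
            + (2*π*(k.val:ℝ)/(4*m) + (-(t':ℝ)*(2*π/(4*(m:ℝ)))/4)))
          - (2*π*(i.val:ℝ)/(4*m) + (-(t':ℝ)*(2*π/(4*(m:ℝ)))/4))
          = 2*π*(k.val:ℝ)/(4*m) + (-(t':ℝ)*(2*π/(4*(m:ℝ)))/4) := by ring
      rw [harr]
      refine memo k ?_
      rcases ht2 with h | ⟨_, _, h⟩
      · exact Or.inl h
      · exact Or.inr h
    · rw [sub_zero, mem_sector_iff]
      refine ⟨(t':ℝ)*(2*π/(4*(m:ℝ)))/2, ?_, ?_⟩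
      · by_cases hso : Odd s.val
        · left
          refine ⟨hso, ?_⟩
          rcases ht3 with rfl | rfl | rfl <;> push_cast <;> rw [abs_lt] <;>
            constructor <;> linarith
        · right
          refine ⟨hso, ?_⟩
          have ht0 : t' = 0 := by
            obtain ⟨w, hw⟩ : ∃ w : ℤ, (i.val:ℤ) + k.val - s.val - t' = 4*w :=
              ⟨(m:ℤ)*n, by rw [hn]; ring⟩
            rcases ht2 with rfl | ⟨htv, ⟨a, ha⟩, ⟨b, hb⟩⟩
            · rfl
            · rw [Nat.not_odd_iff_even] at hso
              obtain ⟨c, hc⟩ := hso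
              rcases htv with rfl | rfl <;> omega
          rw [ht0]; push_cast; ring
      · rw [Real.Angle.angle_eq_iff_two_pi_dvd_sub]
        exact ⟨n, rkey m hm i.val k.val s.val t' n hnr⟩
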